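/- Let G = (V,E) be a finite simple graph on n vertices with largest adjacency eigenvalue λ₁. Let J be a nonnegative random variable (the infectious period), let λ > 0, and set p_J = 1 − E[e^{−λJ}]. Suppose p_J·λ₁ < 1 and let I ⊆ V be a nonempty initial infected set, |X(0)| = |I|. Then the expected final size of the SIR epidemic with infectious periods distributed as J and exponential(λ) contact times satisfies E[|Y(∞)|] ≤ √(n·|X(0)|) / (1 − p_J λ₁); if moreover G is regular, then E[|Y(∞)|] ≤ |X(0)| / (1 − p_J λ₁). -/

import Mathlib

open Finset

namespace VirusSpread

variable {V : Type*} [Fintype V] [DecidableEq V]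

/-- Bernoulli bond percolation on `G`: the subgraph of `G` consisting of the retained
edge set `H`. -/
def percSubgraph (G : SimpleGraph V) (H : Finset (Sym2 V)) : SimpleGraph V where
  Adj u v := G.Adj u v ∧ s(u, v) ∈ H
  symm := ⟨fun u v h => ⟨h.1.symm, by rw [Sym2.eq_swap]; exact h.2⟩⟩
  loopless := ⟨fun u h => G.loopless.irrefl u h.1⟩

open scoped Classical in
/-- The set of vertices joined to the initial set `I` by a path of retained edges;
this is the final removed set `Y(∞)` of the Reed–Frost epidemic. -/
noncomputable def reachedSet (G : SimpleGraph V) (H : Finset (Sym2 V)) (I : Finset V) :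
    Finset V :=
  Finset.univ.filter fun v => ∃ u ∈ I, (percSubgraph G H).Reachable u v

open scoped Classical in
/-- The probability of the percolation configuration with retained edge set `H`, when each
edge of `G` is retained independently with probability `β`. -/
noncomputable def percWeight (G : SimpleGraph V) (β : ℝ) (H : Finset (Sym2 V)) : ℝ :=
  β ^ H.card * (1 - β) ^ (G.edgeFinset.card - H.card)

open scoped Classical in
/-- The expected final size `E[|Y(∞)|]` of the Reed–Frost epidemic on `G` with
per-contact infection probability `β`, started from the initial infected set `I`. -/
noncomputable def expectedFinalSize (G : SimpleGraph V) (β : ℝ) (I : Finset V) : ℝ :=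
  ∑ H ∈ G.edgeFinset.powerset, percWeight G β H * ((reachedSet G H I).card : ℝ)


set_option linter.unusedSectionVars false

open Matrix

lemma percSubgraph_le (G : SimpleGraph V) (H : Finset (Sym2 V)) : percSubgraph G H ≤ G :=
  fun _ _ h => h.1

lemma edge_mem_of_percSubgraph (G : SimpleGraph V) (H : Finset (Sym2 V)) {e : Sym2 V}
    (he : e ∈ (percSubgraph G H).edgeSet) : e ∈ H := by
  induction e using Sym2.ind with
  | _ a b => exact ((percSubgraph G H).mem_edgeSet.mp he).2

open scoped Classical in
/-- Indicator that a walk is a path all of whose edges are retained. -/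
noncomputable def pathInd (G : SimpleGraph V) (H : Finset (Sym2 V)) {u v : V}
    (w : G.Walk u v) : ℝ :=
  if w.edges.toFinset ⊆ H ∧ w.IsPath then 1 else 0

lemma pathInd_nonneg (G : SimpleGraph V) (H : Finset (Sym2 V)) {u v : V} (w : G.Walk u v) :
    0 ≤ pathInd G H w := by
  rw [pathInd]; split <;> norm_num

lemma pathInd_eq_one (G : SimpleGraph V) (H : Finset (Sym2 V)) {u v : V} {w : G.Walk u v}
    (h1 : w.edges.toFinset ⊆ H) (h2 : w.IsPath) : pathInd G H w = 1 := by
  rw [pathInd, if_pos ⟨h1, h2⟩]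

lemma pathInd_eq_zero (G : SimpleGraph V) (H : Finset (Sym2 V)) {u v : V} {w : G.Walk u v}
    (h2 : ¬ w.IsPath) : pathInd G H w = 0 := by
  rw [pathInd, if_neg (fun hc => h2 hc.2)]

lemma pathInd_le_ite (G : SimpleGraph V) (H : Finset (Sym2 V)) {u v : V} {w : G.Walk u v}
    (h2 : w.IsPath) : pathInd G H w = if w.edges.toFinset ⊆ H then (1:ℝ) else 0 := by
  by_cases h : w.edges.toFinset ⊆ H
  · rw [pathInd_eq_one G H h h2, if_pos h]
  · rw [pathInd, if_neg (fun hc => h hc.1), if_neg h]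

/-- union bound skeleton: per-configuration count of reached vertices is at most the
number of retained paths from `I`. -/
lemma reached_card_le (G : SimpleGraph V) [DecidableRel G.Adj] (H : Finset (Sym2 V)) (I : Finset V) :
    ((reachedSet G H I).card : ℝ) ≤
      ∑ v : V, ∑ u ∈ I, ∑ k ∈ Finset.range (Fintype.card V),
        ∑ w ∈ G.finsetWalkLength k u v,
          pathInd G H w := by
  classical
  have hind : ∀ (u v : V) (k : ℕ) (w : G.Walk u v), (0:ℝ) ≤ pathInd G H w :=
    fun u v k w => pathInd_nonneg G H w
  have hvnn : ∀ v : V, (0:ℝ) ≤ ∑ u ∈ I, ∑ k ∈ Finset.range (Fintype.card V),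
      ∑ w ∈ G.finsetWalkLength k u v,
        pathInd G H w := by
    intro v
    exact Finset.sum_nonneg fun u _ => Finset.sum_nonneg fun k _ =>
      Finset.sum_nonneg fun w _ => hind u v k w
  calc ((reachedSet G H I).card : ℝ) = ∑ v ∈ reachedSet G H I, (1:ℝ) := by simp
    _ ≤ ∑ v ∈ reachedSet G H I, ∑ u ∈ I, ∑ k ∈ Finset.range (Fintype.card V),
        ∑ w ∈ G.finsetWalkLength k u v,
          pathInd G H w := by
        refine Finset.sum_le_sum fun v hv => ?_
        rw [reachedSet, Finset.mem_filter] at hv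
        obtain ⟨-, u, hu, hr⟩ := hv
        obtain ⟨p⟩ := hr
        have hpe : ∀ e ∈ p.edges, e ∈ G.edgeSet := fun e he =>
          SimpleGraph.edgeSet_mono (percSubgraph_le G H) (p.edges_subset_edgeSet he)
        set q := (p.transfer G hpe).bypass with hq
        have hqpath : q.IsPath := SimpleGraph.Walk.bypass_isPath _
        have hqe : ∀ e ∈ q.edges, e ∈ H := by
          intro e he
          have h1 : e ∈ (p.transfer G hpe).edges := SimpleGraph.Walk.edges_bypass_subset _ he
          rw [SimpleGraph.Walk.edges_transfer] at h1
          exact edge_mem_of_percSubgraph G H (p.edges_subset_edgeSet h1)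
        have hlen : q.length < Fintype.card V := hqpath.length_lt
        have hterm : pathInd G H q = 1 :=
          pathInd_eq_one G H (fun e he => hqe e (List.mem_toFinset.mp he)) hqpath
        calc (1:ℝ) = pathInd G H q := hterm.symm
          _ ≤ ∑ w ∈ G.finsetWalkLength q.length u v,
              pathInd G H w := by
              refine Finset.single_le_sum (fun w _ => hind u v q.length w) ?_
              exact SimpleGraph.mem_finsetWalkLength_iff.mpr rfl
          _ ≤ ∑ k ∈ Finset.range (Fintype.card V), ∑ w ∈ G.finsetWalkLength k u v,
              pathInd G H w := by
              refine Finset.single_le_sum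
                (f := fun k => ∑ w ∈ G.finsetWalkLength k u v,
                  pathInd G H w)
                (fun k _ => Finset.sum_nonneg fun w _ => hind u v k w) ?_
              exact Finset.mem_range.mpr hlen
          _ ≤ ∑ u' ∈ I, ∑ k ∈ Finset.range (Fintype.card V),
              ∑ w ∈ G.finsetWalkLength k u' v,
              pathInd G H w := by
              refine Finset.single_le_sum
                (f := fun u' => ∑ k ∈ Finset.range (Fintype.card V),
                  ∑ w ∈ G.finsetWalkLength k u' v,
                  pathInd G H w)
                (fun u' _ => Finset.sum_nonneg fun k _ =>
                  Finset.sum_nonneg fun w _ => hind u' v k w) hu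
    _ ≤ ∑ v : V, ∑ u ∈ I, ∑ k ∈ Finset.range (Fintype.card V),
        ∑ w ∈ G.finsetWalkLength k u v,
          pathInd G H w :=
        Finset.sum_le_sum_of_subset_of_nonneg (Finset.subset_univ _) fun v _ _ => hvnn v

section Comb
variable {α : Type*} [DecidableEq α]


lemma sum_weight_one (β : ℝ) (E : Finset α) :
    ∑ H ∈ E.powerset, β ^ H.card * (1 - β) ^ (E.card - H.card) = 1 := by
  have h := Finset.prod_add (fun _ : α => β) (fun _ : α => 1 - β) E
  simp only [add_sub_cancel, Finset.prod_const, one_pow] at h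
  calc ∑ H ∈ E.powerset, β ^ H.card * (1 - β) ^ (E.card - H.card)
      = ∑ H ∈ E.powerset, β ^ H.card * (1 - β) ^ (E \ H).card :=
        Finset.sum_congr rfl fun t ht => by
          rw [Finset.card_sdiff_of_subset (Finset.mem_powerset.mp ht)]
    _ = 1 := h.symm

lemma sum_weight_superset (β : ℝ) (E S : Finset α) (hS : S ⊆ E) :
    ∑ H ∈ E.powerset.filter (fun H => S ⊆ H),
      β ^ H.card * (1 - β) ^ (E.card - H.card) = β ^ S.card := by
  have key : ∑ H ∈ E.powerset.filter (fun H => S ⊆ H),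
      β ^ H.card * (1 - β) ^ (E.card - H.card)
      = ∑ H' ∈ (E \ S).powerset,
        β ^ S.card * (β ^ H'.card * (1 - β) ^ ((E \ S).card - H'.card)) := by
    refine Finset.sum_bij' (fun H _ => H \ S) (fun H' _ => H' ∪ S) ?_ ?_ ?_ ?_ ?_
    · intro H hH
      rw [Finset.mem_filter, Finset.mem_powerset] at hH
      rw [Finset.mem_powerset]
      exact Finset.sdiff_subset_sdiff hH.1 le_rfl
    · intro H' hH'
      rw [Finset.mem_powerset] at hH'
      rw [Finset.mem_filter, Finset.mem_powerset]
      refine ⟨Finset.union_subset (hH'.trans Finset.sdiff_subset) hS, Finset.subset_union_right⟩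
    · intro H hH
      rw [Finset.mem_filter] at hH
      exact Finset.sdiff_union_of_subset hH.2
    · intro H' hH'
      rw [Finset.mem_powerset] at hH'
      have hdisj : Disjoint H' S := Finset.disjoint_of_subset_left hH' Finset.sdiff_disjoint
      rw [Finset.union_sdiff_cancel_right hdisj]
    · intro H hH
      rw [Finset.mem_filter, Finset.mem_powerset] at hH
      have hSH : S.card ≤ H.card := Finset.card_le_card hH.2
      have hHE : H.card ≤ E.card := Finset.card_le_card hH.1
      have hcard : H.card = (H \ S).card + S.card := by
        rw [Finset.card_sdiff_of_subset hH.2]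
        omega
      rw [hcard, Finset.card_sdiff_of_subset hS, Finset.card_sdiff_of_subset hH.2, pow_add]
      have : #E - (#H - #S + #S) = #E - #S - (#H - #S) := by omega
      rw [this]
      ring
  rw [key, ← Finset.mul_sum, sum_weight_one, mul_one]

lemma sum_weight_ind (β : ℝ) (E S : Finset α) (hS : S ⊆ E) :
    ∑ H ∈ E.powerset, (β ^ H.card * (1 - β) ^ (E.card - H.card)) *
      (if S ⊆ H then (1:ℝ) else 0) = β ^ S.card := by
  rw [← sum_weight_superset β E S hS, Finset.sum_filter]
  refine Finset.sum_congr rfl fun H _ => ?_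
  by_cases h : S ⊆ H <;> simp [h]

end Comb

lemma edgeFinset_indep (G : SimpleGraph V) [DecidableRel G.Adj] (i : Fintype G.edgeSet) :
    @SimpleGraph.edgeFinset V G i = G.edgeFinset := by
  rw [Subsingleton.elim i (SimpleGraph.fintypeEdgeSet G)]

lemma percWeight_eq (G : SimpleGraph V) [DecidableRel G.Adj] (β : ℝ) (H : Finset (Sym2 V)) :
    percWeight G β H = β ^ H.card * (1 - β) ^ (G.edgeFinset.card - H.card) := by
  rw [percWeight]
  congr!

lemma expectedFinalSize_eq (G : SimpleGraph V) [DecidableRel G.Adj] (β : ℝ) (I : Finset V) :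
    expectedFinalSize G β I =
      ∑ H ∈ G.edgeFinset.powerset, percWeight G β H * ((reachedSet G H I).card : ℝ) := by
  rw [expectedFinalSize]
  congr!

lemma expectedFinalSize_le_sum (G : SimpleGraph V) [DecidableRel G.Adj] (β : ℝ)
    (hβ0 : 0 ≤ β) (hβ1 : β ≤ 1) (I : Finset V) :
    expectedFinalSize G β I ≤ ∑ k ∈ Finset.range (Fintype.card V), β ^ k *
      ((fun u => if u ∈ I then (1:ℝ) else 0) ⬝ᵥ
        ((G.adjMatrix ℝ ^ k) *ᵥ (fun _ => (1:ℝ)))) := by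
  have h1β : (0:ℝ) ≤ 1 - β := by linarith
  have hw : ∀ H : Finset (Sym2 V), (0:ℝ) ≤ percWeight G β H := by
    intro H
    exact mul_nonneg (pow_nonneg hβ0 _) (pow_nonneg h1β _)
  -- step 1: per-configuration union bound
  have step1 : expectedFinalSize G β I ≤
      ∑ H ∈ G.edgeFinset.powerset, ∑ v : V, ∑ u ∈ I,
        ∑ k ∈ Finset.range (Fintype.card V), ∑ w ∈ G.finsetWalkLength k u v,
          percWeight G β H * pathInd G H w := by
    rw [expectedFinalSize_eq]
    refine Finset.sum_le_sum fun H _ => ?_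
    simp only [← Finset.mul_sum]
    exact mul_le_mul_of_nonneg_left (reached_card_le G H I) (hw H)
  -- step 2: swap sums so that H is innermost
  have step2 : ∑ H ∈ G.edgeFinset.powerset, ∑ v : V, ∑ u ∈ I,
        ∑ k ∈ Finset.range (Fintype.card V), ∑ w ∈ G.finsetWalkLength k u v,
          percWeight G β H * pathInd G H w
      = ∑ v : V, ∑ u ∈ I, ∑ k ∈ Finset.range (Fintype.card V),
          ∑ w ∈ G.finsetWalkLength k u v, ∑ H ∈ G.edgeFinset.powerset,
          percWeight G β H * pathInd G H w := by
    rw [Finset.sum_comm]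
    refine Finset.sum_congr rfl fun v _ => ?_
    rw [Finset.sum_comm]
    refine Finset.sum_congr rfl fun u _ => ?_
    rw [Finset.sum_comm]
    refine Finset.sum_congr rfl fun k _ => ?_
    rw [Finset.sum_comm]
  -- step 3: innermost sum is at most β ^ k
  have step3 : ∀ (u v : V), ∀ k ∈ Finset.range (Fintype.card V),
      ∀ w ∈ G.finsetWalkLength k u v,
      ∑ H ∈ G.edgeFinset.powerset,
        percWeight G β H * pathInd G H w
        ≤ β ^ k := by
    intro u v k _ w hw'
    have hwk : w.length = k := SimpleGraph.mem_finsetWalkLength_iff.mp hw'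
    by_cases hP : w.IsPath
    · have hSE : w.edges.toFinset ⊆ G.edgeFinset := by
        intro e he
        exact SimpleGraph.mem_edgeFinset.mpr (w.edges_subset_edgeSet (List.mem_toFinset.mp he))
      have hcard : w.edges.toFinset.card = k := by
        rw [List.toFinset_card_of_nodup hP.isTrail.edges_nodup,
          SimpleGraph.Walk.length_edges, hwk]
      calc ∑ H ∈ G.edgeFinset.powerset,
            percWeight G β H * pathInd G H w
          = ∑ H ∈ G.edgeFinset.powerset,
            (β ^ H.card * (1 - β) ^ (G.edgeFinset.card - H.card)) *
              (if w.edges.toFinset ⊆ H then (1:ℝ) else 0) := by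
            refine Finset.sum_congr rfl fun H _ => ?_
            rw [percWeight_eq, pathInd_le_ite G H hP]
        _ = β ^ w.edges.toFinset.card := sum_weight_ind β G.edgeFinset w.edges.toFinset hSE
        _ = β ^ k := by rw [hcard]
        _ ≤ β ^ k := le_rfl
    · have : ∀ H ∈ G.edgeFinset.powerset,
          percWeight G β H * pathInd G H w = 0 := by
        intro H _
        rw [pathInd_eq_zero G H hP, mul_zero]
      rw [Finset.sum_congr rfl this, Finset.sum_const, smul_zero]
      exact pow_nonneg hβ0 k
  -- step 4: count walks by adjacency matrix powers
  have step4 : ∑ v : V, ∑ u ∈ I, ∑ k ∈ Finset.range (Fintype.card V),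
        ∑ w ∈ G.finsetWalkLength k u v, ∑ H ∈ G.edgeFinset.powerset,
          percWeight G β H * pathInd G H w
      ≤ ∑ v : V, ∑ u ∈ I, ∑ k ∈ Finset.range (Fintype.card V),
          β ^ k * ((G.adjMatrix ℝ ^ k) u v) := by
    refine Finset.sum_le_sum fun v _ => Finset.sum_le_sum fun u hu =>
      Finset.sum_le_sum fun k hk => ?_
    calc ∑ w ∈ G.finsetWalkLength k u v, ∑ H ∈ G.edgeFinset.powerset,
          percWeight G β H * pathInd G H w
        ≤ ∑ w ∈ G.finsetWalkLength k u v, β ^ k :=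
          Finset.sum_le_sum fun w hw' => step3 u v k hk w hw'
      _ = ((G.finsetWalkLength k u v).card : ℝ) * β ^ k := by
          rw [Finset.sum_const, nsmul_eq_mul]
      _ = β ^ k * ((G.adjMatrix ℝ ^ k) u v) := by
          rw [SimpleGraph.adjMatrix_pow_apply_eq_card_walk, SimpleGraph.card_set_walk_length_eq]
          ring
  -- step 5: rearrange to the dot-product form
  have step5 : ∑ v : V, ∑ u ∈ I, ∑ k ∈ Finset.range (Fintype.card V),
        β ^ k * ((G.adjMatrix ℝ ^ k) u v)
      = ∑ k ∈ Finset.range (Fintype.card V), β ^ k *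
        ((fun u => if u ∈ I then (1:ℝ) else 0) ⬝ᵥ
          ((G.adjMatrix ℝ ^ k) *ᵥ (fun _ => (1:ℝ)))) := by
    have hdot : ∀ k : ℕ, ((fun u => if u ∈ I then (1:ℝ) else 0) ⬝ᵥ
        ((G.adjMatrix ℝ ^ k) *ᵥ (fun _ => (1:ℝ))))
        = ∑ u ∈ I, ∑ v : V, (G.adjMatrix ℝ ^ k) u v := by
      intro k
      rw [dotProduct]
      simp only [Matrix.mulVec, dotProduct, mul_one, ite_mul, one_mul, zero_mul]
      rw [Finset.sum_ite_mem, Finset.univ_inter]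
    calc ∑ v : V, ∑ u ∈ I, ∑ k ∈ Finset.range (Fintype.card V),
          β ^ k * ((G.adjMatrix ℝ ^ k) u v)
        = ∑ u ∈ I, ∑ v : V, ∑ k ∈ Finset.range (Fintype.card V),
          β ^ k * ((G.adjMatrix ℝ ^ k) u v) := Finset.sum_comm
      _ = ∑ u ∈ I, ∑ k ∈ Finset.range (Fintype.card V), ∑ v : V,
          β ^ k * ((G.adjMatrix ℝ ^ k) u v) :=
          Finset.sum_congr rfl fun u _ => Finset.sum_comm
      _ = ∑ k ∈ Finset.range (Fintype.card V), ∑ u ∈ I, ∑ v : V,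
          β ^ k * ((G.adjMatrix ℝ ^ k) u v) := Finset.sum_comm
      _ = ∑ k ∈ Finset.range (Fintype.card V), β ^ k *
          ((fun u => if u ∈ I then (1:ℝ) else 0) ⬝ᵥ
            ((G.adjMatrix ℝ ^ k) *ᵥ (fun _ => (1:ℝ)))) := by
          refine Finset.sum_congr rfl fun k _ => ?_
          rw [hdot k, Finset.mul_sum]
          refine Finset.sum_congr rfl fun u _ => ?_
          rw [Finset.mul_sum]
  calc expectedFinalSize G β I ≤ _ := step1
    _ = _ := step2
    _ ≤ _ := step4
    _ = _ := step5

section Spectral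


lemma myConjPow (U D : Matrix V V ℝ) (h : star U * U = 1) (h1 : U * star U = 1) (k : ℕ) :
    (U * D * star U) ^ k = U * D ^ k * star U := by
  induction k with
  | zero => simp only [pow_zero, Matrix.mul_one, h1]
  | succ n ih =>
    rw [pow_succ, ih, pow_succ]
    calc U * D ^ n * star U * (U * D * star U)
        = U * D ^ n * (star U * U) * (D * star U) := by
          simp only [Matrix.mul_assoc]
      _ = U * (D ^ n * D) * star U := by rw [h]; simp only [Matrix.mul_one, Matrix.mul_assoc]

lemma pow_spectral (A : Matrix V V ℝ) (hA : A.IsHermitian) (k : ℕ) :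
    A ^ k = (hA.eigenvectorUnitary : Matrix V V ℝ) *
      (Matrix.diagonal hA.eigenvalues) ^ k * star (hA.eigenvectorUnitary : Matrix V V ℝ) := by
  have h2 : star (hA.eigenvectorUnitary : Matrix V V ℝ) * (hA.eigenvectorUnitary : Matrix V V ℝ) = 1 :=
    (Matrix.mem_unitaryGroup_iff').mp hA.eigenvectorUnitary.2
  have h1 : (hA.eigenvectorUnitary : Matrix V V ℝ) * star (hA.eigenvectorUnitary : Matrix V V ℝ) = 1 :=
    (Matrix.mem_unitaryGroup_iff).mp hA.eigenvectorUnitary.2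
  have hsp : A = (hA.eigenvectorUnitary : Matrix V V ℝ) * Matrix.diagonal hA.eigenvalues *
      star (hA.eigenvectorUnitary : Matrix V V ℝ) := by
    simpa using hA.spectral_theorem
  rw [← myConjPow _ _ h2 h1, ← hsp]

/-- quadratic form identity -/
lemma quad_form (A : Matrix V V ℝ) (hA : A.IsHermitian) (k : ℕ) (x y : V → ℝ) :
    x ⬝ᵥ ((A ^ k) *ᵥ y) =
      ∑ i, hA.eigenvalues i ^ k *
        ((star (hA.eigenvectorUnitary : Matrix V V ℝ) *ᵥ x) i *
         ((star (hA.eigenvectorUnitary : Matrix V V ℝ) *ᵥ y) i)) := by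
  set U := (hA.eigenvectorUnitary : Matrix V V ℝ) with hU
  rw [pow_spectral A hA k, ← hU]
  have hst : star U = Uᵀ := by
    rw [Matrix.star_eq_conjTranspose, Matrix.conjTranspose_eq_transpose_of_trivial]
  rw [Matrix.diagonal_pow, ← Matrix.mulVec_mulVec, ← Matrix.mulVec_mulVec,
    Matrix.dotProduct_mulVec]
  simp only [hst, Matrix.mulVec_transpose]
  simp only [dotProduct, Matrix.mulVec_diagonal, Pi.pow_apply]
  exact Finset.sum_congr rfl fun i _ => by ring

lemma coeff_norm (A : Matrix V V ℝ) (hA : A.IsHermitian) (x : V → ℝ) :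
    (star (hA.eigenvectorUnitary : Matrix V V ℝ) *ᵥ x) ⬝ᵥ
      (star (hA.eigenvectorUnitary : Matrix V V ℝ) *ᵥ x) = x ⬝ᵥ x := by
  set U := (hA.eigenvectorUnitary : Matrix V V ℝ) with hU
  have h1 : U * star U = 1 := (Matrix.mem_unitaryGroup_iff).mp hA.eigenvectorUnitary.2
  have hst : star U = Uᵀ := by
    rw [Matrix.star_eq_conjTranspose, Matrix.conjTranspose_eq_transpose_of_trivial]
  rw [hst, Matrix.mulVec_transpose, ← Matrix.dotProduct_mulVec, ← Matrix.mulVec_transpose,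
    ← hst, Matrix.mulVec_mulVec, h1, Matrix.one_mulVec]

lemma rayleigh_le (A : Matrix V V ℝ) (hA : A.IsHermitian) (lam1 : ℝ)
    (hmax : ∀ v, hA.eigenvalues v ≤ lam1) (w : V → ℝ) :
    w ⬝ᵥ (A *ᵥ w) ≤ lam1 * (w ⬝ᵥ w) := by
  have h := quad_form A hA 1 w w
  rw [pow_one] at h
  rw [h, ← coeff_norm A hA w]
  rw [dotProduct]
  rw [Finset.mul_sum]
  refine Finset.sum_le_sum fun i _ => ?_
  simp only [pow_one]
  exact mul_le_mul_of_nonneg_right (hmax i) (mul_self_nonneg _)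

lemma eigenvalue_abs_le (A : Matrix V V ℝ) (hA : A.IsHermitian)
    (hnn : ∀ i j, 0 ≤ A i j) (lam1 : ℝ)
    (hmax : ∀ v, hA.eigenvalues v ≤ lam1) (i : V) :
    |hA.eigenvalues i| ≤ lam1 := by
  set v : V → ℝ := ⇑(hA.eigenvectorBasis i) with hv
  have hev : A *ᵥ v = hA.eigenvalues i • v := hA.mulVec_eigenvectorBasis i
  have hvne : v ≠ 0 := by
    intro h
    exact hA.eigenvectorBasis.orthonormal.ne_zero i (by ext j; exact congrFun h j)
  have hvv : 0 < v ⬝ᵥ v := by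
    have hnn0 : 0 ≤ v ⬝ᵥ v := Finset.sum_nonneg fun j _ => mul_self_nonneg _
    rcases lt_or_eq_of_le hnn0 with h | h
    · exact h
    · exact absurd ((dotProduct_self_eq_zero).mp h.symm) hvne
  have hray : v ⬝ᵥ (A *ᵥ v) = hA.eigenvalues i * (v ⬝ᵥ v) := by
    rw [hev, dotProduct_smul]; rfl
  have habs : |v| ⬝ᵥ (A *ᵥ |v|) ≤ lam1 * (|v| ⬝ᵥ |v|) := rayleigh_le A hA lam1 hmax _
  have habs2 : (|v| : V → ℝ) ⬝ᵥ |v| = v ⬝ᵥ v := by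
    refine Finset.sum_congr rfl fun j _ => ?_
    simp [Pi.abs_apply, abs_mul_abs_self]
  have hle : v ⬝ᵥ (A *ᵥ v) ≤ |v| ⬝ᵥ (A *ᵥ |v|) := by
    simp only [dotProduct, Matrix.mulVec, dotProduct]
    refine Finset.sum_le_sum fun j _ => ?_
    rw [Finset.mul_sum, Finset.mul_sum]
    refine Finset.sum_le_sum fun l _ => ?_
    calc v j * (A j l * v l) ≤ |v j * (A j l * v l)| := le_abs_self _
      _ = |v| j * (A j l * |v| l) := by
          simp only [abs_mul, Pi.abs_apply, abs_of_nonneg (hnn j l)]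
  have hge : -(|v| ⬝ᵥ (A *ᵥ |v|)) ≤ v ⬝ᵥ (A *ᵥ v) := by
    simp only [dotProduct, Matrix.mulVec, dotProduct]
    rw [← Finset.sum_neg_distrib]
    refine Finset.sum_le_sum fun j _ => ?_
    rw [Finset.mul_sum, Finset.mul_sum, ← Finset.sum_neg_distrib]
    refine Finset.sum_le_sum fun l _ => ?_
    calc -(|v| j * (A j l * |v| l)) = -|v j * (A j l * v l)| := by
          simp only [abs_mul, Pi.abs_apply, abs_of_nonneg (hnn j l)]
      _ ≤ v j * (A j l * v l) := neg_abs_le _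
  rw [abs_le]
  constructor
  · have := le_trans (le_trans (neg_le_neg habs) hge) (le_of_eq hray)
    rw [habs2] at this
    nlinarith [hvv]
  · have := le_trans (le_of_eq hray.symm) (le_trans hle habs)
    rw [habs2] at this
    nlinarith [hvv]

lemma dot_pow_mulVec_le (A : Matrix V V ℝ) (hA : A.IsHermitian)
    (hnn : ∀ i j, 0 ≤ A i j) (lam1 : ℝ) (hlam1 : 0 ≤ lam1)
    (hmax : ∀ v, hA.eigenvalues v ≤ lam1) (k : ℕ) (x y : V → ℝ) :
    x ⬝ᵥ ((A ^ k) *ᵥ y) ≤ lam1 ^ k * (Real.sqrt (x ⬝ᵥ x) * Real.sqrt (y ⬝ᵥ y)) := by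
  rw [quad_form A hA k x y]
  set c := star (hA.eigenvectorUnitary : Matrix V V ℝ) *ᵥ x with hc
  set d := star (hA.eigenvectorUnitary : Matrix V V ℝ) *ᵥ y with hd
  calc ∑ i, hA.eigenvalues i ^ k * (c i * d i)
      ≤ ∑ i, lam1 ^ k * (|c i| * |d i|) := by
        refine Finset.sum_le_sum fun i _ => ?_
        calc hA.eigenvalues i ^ k * (c i * d i) ≤ |hA.eigenvalues i ^ k * (c i * d i)| :=
              le_abs_self _
          _ = |hA.eigenvalues i| ^ k * (|c i| * |d i|) := by
              rw [abs_mul, abs_mul, abs_pow]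
          _ ≤ lam1 ^ k * (|c i| * |d i|) := by
              refine mul_le_mul_of_nonneg_right ?_ (by positivity)
              exact pow_le_pow_left₀ (abs_nonneg _) (eigenvalue_abs_le A hA hnn lam1 hmax i) k
    _ = lam1 ^ k * ∑ i, |c i| * |d i| := by rw [Finset.mul_sum]
    _ ≤ lam1 ^ k * (Real.sqrt (x ⬝ᵥ x) * Real.sqrt (y ⬝ᵥ y)) := by
        refine mul_le_mul_of_nonneg_left ?_ (by positivity)
        have := Real.sum_mul_le_sqrt_mul_sqrt Finset.univ (fun i => |c i|) (fun i => |d i|)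
        simp only [sq_abs] at this
        have hcx : ∑ i, c i ^ 2 = x ⬝ᵥ x := by
          rw [← coeff_norm A hA x, ← hc, dotProduct]
          exact Finset.sum_congr rfl fun i _ => (sq (c i)).symm ▸ (pow_two (c i)).symm ▸ rfl
        have hdy : ∑ i, d i ^ 2 = y ⬝ᵥ y := by
          rw [← coeff_norm A hA y, ← hd, dotProduct]
          exact Finset.sum_congr rfl fun i _ => (pow_two (d i)).symm ▸ rfl
        rw [hcx, hdy] at this
        exact this


lemma sum_eigenvalues_eq (A : Matrix V V ℝ) (hA : A.IsHermitian) :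
    ∑ i, hA.eigenvalues i = A.trace := by
  have h2 : star (hA.eigenvectorUnitary : Matrix V V ℝ) * (hA.eigenvectorUnitary : Matrix V V ℝ) = 1 :=
    (Matrix.mem_unitaryGroup_iff').mp hA.eigenvectorUnitary.2
  have hsp : A = (hA.eigenvectorUnitary : Matrix V V ℝ) * Matrix.diagonal hA.eigenvalues *
      star (hA.eigenvectorUnitary : Matrix V V ℝ) := by
    simpa using hA.spectral_theorem
  conv_rhs => rw [hsp]
  rw [Matrix.trace_mul_comm, ← Matrix.mul_assoc, h2, Matrix.one_mul, Matrix.trace_diagonal]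

end Spectral

lemma my_geom_le (r : ℝ) (h0 : 0 ≤ r) (h1 : r < 1) (n : ℕ) :
    ∑ k ∈ Finset.range n, r ^ k ≤ 1 / (1 - r) := by
  have h1r : (0:ℝ) < 1 - r := by linarith
  rw [le_div_iff₀ h1r]
  have h := geom_sum_mul r n
  nlinarith [pow_nonneg h0 n]

lemma mulVec_one_regular (G : SimpleGraph V) [DecidableRel G.Adj] {d : ℕ}
    (h : G.IsRegularOfDegree d) (k : ℕ) :
    (G.adjMatrix ℝ ^ k) *ᵥ (fun _ => (1:ℝ)) = fun _ => (d:ℝ) ^ k := by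
  induction k with
  | zero => simp [Matrix.one_mulVec]
  | succ n ih =>
    have h1 : G.adjMatrix ℝ *ᵥ (fun _ => (1:ℝ)) = fun _ => (d:ℝ) := by
      funext v
      have := SimpleGraph.adjMatrix_mulVec_const_apply_of_regular (α := ℝ) (a := 1) h (v := v)
      simpa using this
    calc (G.adjMatrix ℝ ^ (n + 1)) *ᵥ (fun _ => (1:ℝ))
        = (G.adjMatrix ℝ ^ n) *ᵥ (G.adjMatrix ℝ *ᵥ (fun _ => (1:ℝ))) := by
          rw [Matrix.mulVec_mulVec, ← pow_succ]
      _ = (d:ℝ) • ((G.adjMatrix ℝ ^ n) *ᵥ (fun _ => (1:ℝ))) := by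
          rw [h1, show (fun _ : V => (d:ℝ)) = (d:ℝ) • (fun _ : V => (1:ℝ)) from
            funext fun v => by norm_num, Matrix.mulVec_smul]
      _ = fun _ => (d:ℝ) ^ (n + 1) := by
          rw [ih]; funext v; simp [pow_succ]; ring


open MeasureTheory in
/-- For the SIR epidemic with general infectious periods distributed as `J` and
exponential(λ) contact times, if `p_J λ₁ < 1` where `p_J = 1 - E[exp(-λ J)]`, then
`E[|Y(∞)|] ≤ √(n |X(0)|)/(1 - p_J λ₁)`, and for regular graphs
`E[|Y(∞)|] ≤ |X(0)|/(1 - p_J λ₁)`. -/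
theorem expectedFinalSize_le_of_general_infectious_period
    (G : SimpleGraph V) [DecidableRel G.Adj]
    {Ω : Type*} [MeasurableSpace Ω] (μ : Measure Ω) [IsProbabilityMeasure μ]
    (J : Ω → ℝ) (hJmeas : Measurable J) (hJ0 : ∀ ω, 0 ≤ J ω)
    (lam : ℝ) (hlam : 0 < lam)
    (hint : Integrable (fun ω => Real.exp (-lam * J ω)) μ)
    (pJ : ℝ) (hpJ : pJ = 1 - ∫ ω, Real.exp (-lam * J ω) ∂μ)
    (hA : (G.adjMatrix ℝ).IsHermitian) (lam1 : ℝ)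
    (hmax : ∀ v, hA.eigenvalues v ≤ lam1) (hmem : ∃ v, hA.eigenvalues v = lam1)
    (hthr : pJ * lam1 < 1)
    (I : Finset V) (hI : I.Nonempty) :
    expectedFinalSize G pJ I
        ≤ Real.sqrt ((Fintype.card V : ℝ) * (I.card : ℝ)) / (1 - pJ * lam1) ∧
      ∀ d : ℕ, G.IsRegularOfDegree d →
        expectedFinalSize G pJ I ≤ (I.card : ℝ) / (1 - pJ * lam1) := by
  have hV : Nonempty V := ⟨hI.choose⟩
  have hnn : ∀ i j, 0 ≤ G.adjMatrix ℝ i j := by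
    intro i j
    rw [SimpleGraph.adjMatrix_apply]
    split <;> norm_num
  -- bounds on pJ
  have hint0 : 0 ≤ ∫ ω, Real.exp (-lam * J ω) ∂μ :=
    integral_nonneg fun ω => (Real.exp_pos _).le
  have hint1 : ∫ ω, Real.exp (-lam * J ω) ∂μ ≤ 1 := by
    have hle : ∀ ω, Real.exp (-lam * J ω) ≤ 1 := by
      intro ω
      rw [← Real.exp_zero]
      exact Real.exp_le_exp.mpr (by nlinarith [hJ0 ω])
    calc ∫ ω, Real.exp (-lam * J ω) ∂μ ≤ ∫ _ω, (1:ℝ) ∂μ :=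
          integral_mono hint (integrable_const 1) hle
      _ = 1 := by simp
  have hβ0 : 0 ≤ pJ := by rw [hpJ]; linarith
  have hβ1 : pJ ≤ 1 := by rw [hpJ]; linarith
  -- lam1 is nonnegative
  have htr : ∑ i, hA.eigenvalues i = (G.adjMatrix ℝ).trace := sum_eigenvalues_eq _ hA
  have htr0 : (G.adjMatrix ℝ).trace = 0 := by simp
  have hlam1 : 0 ≤ lam1 := by
    by_contra hcon
    push_neg at hcon
    have hcard : 0 < (Fintype.card V : ℝ) := by
      have := Fintype.card_pos (α := V)
      exact_mod_cast this
    have hsum : ∑ i : V, hA.eigenvalues i ≤ (Fintype.card V : ℝ) * lam1 := by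
      calc ∑ i : V, hA.eigenvalues i ≤ ∑ _i : V, lam1 :=
            Finset.sum_le_sum fun i _ => hmax i
        _ = (Fintype.card V : ℝ) * lam1 := by
            rw [Finset.sum_const, nsmul_eq_mul, Finset.card_univ]
    rw [htr, htr0] at hsum
    nlinarith
  have hr0 : 0 ≤ pJ * lam1 := mul_nonneg hβ0 hlam1
  have hone : (0:ℝ) < 1 - pJ * lam1 := by linarith
  have key := expectedFinalSize_le_sum G pJ hβ0 hβ1 I
  have hIdot : (fun u => if u ∈ I then (1:ℝ) else 0) ⬝ᵥ (fun u => if u ∈ I then (1:ℝ) else 0)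
      = (I.card : ℝ) := by
    simp only [dotProduct, ite_mul, one_mul, zero_mul]
    rw [Finset.sum_ite_mem, Finset.univ_inter]
    rw [Finset.sum_congr rfl (fun i hi => if_pos hi), Finset.sum_const, nsmul_eq_mul, mul_one]
  have honedot : (fun _ : V => (1:ℝ)) ⬝ᵥ (fun _ : V => (1:ℝ)) = (Fintype.card V : ℝ) := by
    simp [dotProduct]
  have hIcast : (0:ℝ) ≤ (I.card : ℝ) := Nat.cast_nonneg _
  have hgeom := my_geom_le (pJ * lam1) hr0 hthr (Fintype.card V)
  constructor
  · -- general bound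
    set C := Real.sqrt ((Fintype.card V : ℝ) * (I.card : ℝ)) with hC
    have hCnn : 0 ≤ C := Real.sqrt_nonneg _
    have hbd : ∀ k ∈ Finset.range (Fintype.card V),
        pJ ^ k * ((fun u => if u ∈ I then (1:ℝ) else 0) ⬝ᵥ
          ((G.adjMatrix ℝ ^ k) *ᵥ (fun _ => (1:ℝ)))) ≤ C * (pJ * lam1) ^ k := by
      intro k _
      have hdp := dot_pow_mulVec_le (G.adjMatrix ℝ) hA hnn lam1 hlam1 hmax k
        (fun u => if u ∈ I then (1:ℝ) else 0) (fun _ => (1:ℝ))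
      rw [hIdot, honedot] at hdp
      have hsq : Real.sqrt ((I.card : ℝ)) * Real.sqrt ((Fintype.card V : ℝ)) = C := by
        rw [hC, ← Real.sqrt_mul hIcast, mul_comm]
      rw [hsq] at hdp
      calc pJ ^ k * ((fun u => if u ∈ I then (1:ℝ) else 0) ⬝ᵥ
            ((G.adjMatrix ℝ ^ k) *ᵥ (fun _ => (1:ℝ))))
          ≤ pJ ^ k * (lam1 ^ k * C) :=
            mul_le_mul_of_nonneg_left hdp (pow_nonneg hβ0 k)
        _ = C * (pJ * lam1) ^ k := by rw [mul_pow]; ring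
    calc expectedFinalSize G pJ I ≤ _ := key
      _ ≤ ∑ k ∈ Finset.range (Fintype.card V), C * (pJ * lam1) ^ k :=
          Finset.sum_le_sum hbd
      _ = C * ∑ k ∈ Finset.range (Fintype.card V), (pJ * lam1) ^ k := by
          rw [Finset.mul_sum]
      _ ≤ C * (1 / (1 - pJ * lam1)) := mul_le_mul_of_nonneg_left hgeom hCnn
      _ = C / (1 - pJ * lam1) := by ring
  · -- regular bound
    intro d hreg
    have hAk1 := mulVec_one_regular G hreg
    have hdnn : (0:ℝ) ≤ (d:ℝ) := Nat.cast_nonneg _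
    have hcard : 0 < (Fintype.card V : ℝ) := by
      have := Fintype.card_pos (α := V)
      exact_mod_cast this
    have hd : (d:ℝ) ≤ lam1 := by
      have h := rayleigh_le (G.adjMatrix ℝ) hA lam1 hmax (fun _ => (1:ℝ))
      have h1 : (fun _ : V => (1:ℝ)) ⬝ᵥ (G.adjMatrix ℝ *ᵥ (fun _ => (1:ℝ)))
          = (Fintype.card V : ℝ) * (d:ℝ) := by
        have := hAk1 1
        rw [pow_one] at this
        rw [this]
        simp [dotProduct, Finset.sum_const, Finset.card_univ]
      rw [h1, honedot] at h
      nlinarith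
    have hdotk : ∀ k : ℕ, (fun u => if u ∈ I then (1:ℝ) else 0) ⬝ᵥ
        ((G.adjMatrix ℝ ^ k) *ᵥ (fun _ => (1:ℝ))) = (I.card : ℝ) * (d:ℝ) ^ k := by
      intro k
      rw [hAk1 k]
      simp only [dotProduct, ite_mul, one_mul, zero_mul]
      rw [Finset.sum_ite_mem, Finset.univ_inter, Finset.sum_const, nsmul_eq_mul]
    have hbd : ∀ k ∈ Finset.range (Fintype.card V),
        pJ ^ k * ((fun u => if u ∈ I then (1:ℝ) else 0) ⬝ᵥ
          ((G.adjMatrix ℝ ^ k) *ᵥ (fun _ => (1:ℝ)))) ≤ (I.card : ℝ) * (pJ * lam1) ^ k := by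
      intro k _
      rw [hdotk k]
      calc pJ ^ k * ((I.card : ℝ) * (d:ℝ) ^ k)
          ≤ pJ ^ k * ((I.card : ℝ) * lam1 ^ k) := by
            refine mul_le_mul_of_nonneg_left ?_ (pow_nonneg hβ0 k)
            exact mul_le_mul_of_nonneg_left (pow_le_pow_left₀ hdnn hd k) hIcast
        _ = (I.card : ℝ) * (pJ * lam1) ^ k := by rw [mul_pow]; ring
    calc expectedFinalSize G pJ I ≤ _ := key
      _ ≤ ∑ k ∈ Finset.range (Fintype.card V), (I.card : ℝ) * (pJ * lam1) ^ k :=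
          Finset.sum_le_sum hbd
      _ = (I.card : ℝ) * ∑ k ∈ Finset.range (Fintype.card V), (pJ * lam1) ^ k := by
          rw [Finset.mul_sum]
      _ ≤ (I.card : ℝ) * (1 / (1 - pJ * lam1)) := mul_le_mul_of_nonneg_left hgeom hIcast
      _ = (I.card : ℝ) / (1 - pJ * lam1) := by ring


end VirusSpread
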